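/- Let G be a K_{s,s}-free graph and v a vertex with deg(v) ≥ 6^s·s. Then the number of induced paths x–v–y (with x, y ∈ N(v), x ≠ y, and xy not an edge of G) is at least deg(v)²/4. -/

import Mathlib

open SimpleGraph

/-- `G` contains no (not necessarily induced) subgraph isomorphic to `K_{s,s}`. -/
def KssFree {V : Type*} (s : ℕ) (G : SimpleGraph V) : Prop :=
  ∀ f : completeBipartiteGraph (Fin s) (Fin s) →g G, ¬ Function.Injective f

open Finset in
lemma pow_sub_le_descFactorial (d : ℕ) : ∀ s : ℕ, (d - s)^s ≤ d.descFactorial s := by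
  intro s
  induction s with
  | zero => simp
  | succ r ih =>
    rw [Nat.descFactorial_succ, pow_succ]
    calc (d - (r+1))^r * (d - (r+1)) ≤ d.descFactorial r * (d - r) := by
          apply Nat.mul_le_mul
          · exact le_trans (Nat.pow_le_pow_left (by omega) r) ih
          · omega
      _ = (d - r) * d.descFactorial r := Nat.mul_comm _ _

open Finset in
lemma common_bound {V : Type*} [Fintype V] (G : SimpleGraph V) (s : ℕ)
    (hfree : KssFree s G) [DecidableEq V] [DecidableRel G.Adj] (T : Finset V) (hT : T.card = s) :
    (Finset.univ.filter (fun u => ∀ t ∈ T, G.Adj u t)).card ≤ s - 1 := by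
  by_contra h
  have hs : s ≤ (Finset.univ.filter (fun u => ∀ t ∈ T, G.Adj u t)).card := by omega
  obtain ⟨U, hUsub, hUcard⟩ := Finset.exists_subset_card_eq hs
  have hUadj : ∀ u ∈ U, ∀ t ∈ T, G.Adj u t := by
    intro u hu
    have := hUsub hu
    simpa using this
  have hdisj : ∀ u ∈ U, u ∉ T := by
    intro u hu ht
    exact G.irrefl (hUadj u hu u ht)
  let eU := Finset.equivFinOfCardEq hUcard
  let eT := Finset.equivFinOfCardEq hT
  let f : Fin s ⊕ Fin s → V := Sum.elim (fun i => ((eU.symm i : U) : V)) (fun j => ((eT.symm j : T) : V))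
  have hadj : ∀ {a b}, (completeBipartiteGraph (Fin s) (Fin s)).Adj a b → G.Adj (f a) (f b) := by
    rintro (i | i) (j | j) hab <;> simp only [completeBipartiteGraph_adj] at hab <;>
      simp only [Sum.elim_inl, Sum.elim_inr, f] at *
    · simp at hab
    · exact hUadj _ (eU.symm i).2 _ (eT.symm j).2
    · exact (hUadj _ (eU.symm j).2 _ (eT.symm i).2).symm
    · simp at hab
  have hinj : Function.Injective f := by
    rintro (i | i) (j | j) hab <;> simp only [Sum.elim_inl, Sum.elim_inr, f] at hab
    · have : eU.symm i = eU.symm j := Subtype.ext hab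
      simpa using eU.symm.injective this
    · exact absurd ((eT.symm j).2) (hab ▸ hdisj _ (eU.symm i).2)
    · exact absurd ((eT.symm i).2) (hab.symm ▸ hdisj _ (eU.symm j).2)
    · have : eT.symm i = eT.symm j := Subtype.ext hab
      simpa using eT.symm.injective this
  exact hfree ⟨f, hadj⟩ hinj

open Finset in
lemma kst_bound {V : Type*} [Fintype V] (G : SimpleGraph V) [DecidableEq V]
    [DecidableRel G.Adj] (r : ℕ) (hfree : KssFree (r+1) G) (A : Finset V)
    (hA : 6^(r+1)*(r+1) ≤ A.card) :
    3 * (∑ u ∈ A, (A.filter (G.Adj u)).card) + 1 ≤ A.card * A.card := by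
  set s := r + 1 with hsdef
  set n := A.card with hndef
  set d : V → ℕ := fun u => (A.filter (G.Adj u)).card with hddef
  -- double counting: sum of chooses
  have hchoose : ∑ u ∈ A, (d u).choose s ≤ (s - 1) * n.choose s := by
    have step1 : ∀ u, (d u).choose s = ((A.powersetCard s).filter (fun T => T ⊆ A.filter (G.Adj u))).card := by
      intro u
      have : (A.powersetCard s).filter (fun T => T ⊆ A.filter (G.Adj u))
          = (A.filter (G.Adj u)).powersetCard s := by
        ext T
        simp only [Finset.mem_filter, Finset.mem_powersetCard]
        exact ⟨fun h => ⟨h.2, h.1.2⟩, fun h => ⟨⟨h.1.trans (Finset.filter_subset _ _), h.2⟩, h.1⟩⟩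
      rw [this, Finset.card_powersetCard]
    calc ∑ u ∈ A, (d u).choose s
        = ∑ u ∈ A, ∑ T ∈ A.powersetCard s, if T ⊆ A.filter (G.Adj u) then 1 else 0 := by
          simp_rw [step1, Finset.card_filter]
      _ = ∑ T ∈ A.powersetCard s, ∑ u ∈ A, if T ⊆ A.filter (G.Adj u) then 1 else 0 :=
          Finset.sum_comm
      _ = ∑ T ∈ A.powersetCard s, (A.filter (fun u => T ⊆ A.filter (G.Adj u))).card := by
          simp_rw [Finset.card_filter]
      _ ≤ ∑ T ∈ A.powersetCard s, (s - 1) := by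
          apply Finset.sum_le_sum
          intro T hT
          rw [Finset.mem_powersetCard] at hT
          calc (A.filter (fun u => T ⊆ A.filter (G.Adj u))).card
              ≤ (Finset.univ.filter (fun u => ∀ t ∈ T, G.Adj u t)).card := by
                apply Finset.card_le_card
                intro u hu
                rw [Finset.mem_filter] at hu ⊢
                exact ⟨Finset.mem_univ _, fun t ht => (Finset.mem_filter.1 (hu.2 ht)).2⟩
            _ ≤ s - 1 := common_bound G s hfree T hT.2
      _ = (A.powersetCard s).card * (s-1) := by rw [Finset.sum_const, smul_eq_mul]
      _ = (s - 1) * n.choose s := by rw [Finset.card_powersetCard, Nat.mul_comm]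
  -- bound on sum of powers
  have hpowsum : ∑ u ∈ A, (d u - s)^s ≤ r * n^s := by
    calc ∑ u ∈ A, (d u - s)^s ≤ ∑ u ∈ A, (d u).descFactorial s :=
          Finset.sum_le_sum fun u _ => pow_sub_le_descFactorial (d u) s
      _ = ∑ u ∈ A, Nat.factorial s * (d u).choose s := by
          simp_rw [Nat.descFactorial_eq_factorial_mul_choose]
      _ = Nat.factorial s * ∑ u ∈ A, (d u).choose s := by rw [Finset.mul_sum]
      _ ≤ Nat.factorial s * ((s-1) * n.choose s) := Nat.mul_le_mul_left _ hchoose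
      _ = (s-1) * (Nat.factorial s * n.choose s) := by ring
      _ = (s-1) * n.descFactorial s := by rw [Nat.descFactorial_eq_factorial_mul_choose]
      _ ≤ r * n^s := by
          have h1 : s - 1 = r := by omega
          rw [h1]
          exact Nat.mul_le_mul_left _ (Nat.descFactorial_le_pow n s)
  -- now by contradiction
  by_contra hcon
  have heta : A.sum d = ∑ u ∈ A, d u := rfl
  have hD : n * n ≤ 3 * (∑ u ∈ A, d u) := by omega
  have hn6s : 6 * s ≤ n := by
    calc 6 * s ≤ 6^s * s := Nat.mul_le_mul_right s (Nat.le_self_pow (by omega) 6 |>.trans_eq rfl)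
    _ ≤ n := hA
  have hnpos : 0 < n := by omega
  -- sum of m
  set Sm := ∑ u ∈ A, (d u - s) with hSm
  have h1 : n * n ≤ 6 * Sm := by
    have hsum : (∑ u ∈ A, d u) ≤ Sm + n * s := by
      calc (∑ u ∈ A, d u) ≤ ∑ u ∈ A, (d u - s + s) := Finset.sum_le_sum fun u _ => by omega
        _ = Sm + A.card * s := by
            rw [Finset.sum_add_distrib, Finset.sum_const, smul_eq_mul]
        _ = Sm + n * s := rfl
    have h6ns : 6 * (n * s) ≤ n * n := by
      calc 6 * (n * s) = n * (6 * s) := by ring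
        _ ≤ n * n := Nat.mul_le_mul_left n hn6s
    omega
  -- cast to reals
  have hR1 : ((n : ℝ) * n) ≤ 6 * (Sm : ℝ) := by exact_mod_cast h1
  have hR2 : ((∑ u ∈ A, ((d u - s : ℕ) : ℝ)^s)) ≤ (r : ℝ) * (n : ℝ)^s := by
    calc (∑ u ∈ A, ((d u - s : ℕ) : ℝ)^s) = ((∑ u ∈ A, (d u - s)^s : ℕ) : ℝ) := by push_cast; ring
      _ ≤ ((r * n^s : ℕ) : ℝ) := by exact_mod_cast hpowsum
      _ = (r : ℝ) * (n : ℝ)^s := by push_cast; ring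
  have hR3 : (Sm : ℝ)^s / (n : ℝ)^r ≤ ∑ u ∈ A, ((d u - s : ℕ) : ℝ)^s := by
    have := pow_sum_div_card_le_sum_pow (s := A) (f := fun u => ((d u - s : ℕ) : ℝ))
      (fun i _ => by positivity) r
    rw [← hndef] at this
    convert this using 2
    · rfl
    · rw [hSm]; push_cast; ring
  have hnR : (0:ℝ) < (n:ℝ) := by exact_mod_cast hnpos
  have hnrpos : (0:ℝ) < (n:ℝ)^r := by positivity
  have hSmpow : (Sm : ℝ)^s ≤ (∑ u ∈ A, ((d u - s : ℕ) : ℝ)^s) * (n:ℝ)^r := by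
    rw [← div_le_iff₀ hnrpos] at *
    exact hR3
  have key : ((n:ℝ) * n)^s ≤ 6^s * ((r : ℝ) * (n:ℝ)^s) * (n:ℝ)^r := by
    calc ((n:ℝ) * n)^s ≤ (6 * (Sm:ℝ))^s := by
          apply pow_le_pow_left₀ (by positivity) hR1
      _ = 6^s * (Sm:ℝ)^s := by rw [mul_pow]
      _ ≤ 6^s * ((∑ u ∈ A, ((d u - s : ℕ) : ℝ)^s) * (n:ℝ)^r) := by
          apply mul_le_mul_of_nonneg_left hSmpow (by positivity)
      _ ≤ 6^s * (((r : ℝ) * (n:ℝ)^s) * (n:ℝ)^r) := by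
          apply mul_le_mul_of_nonneg_left (mul_le_mul_of_nonneg_right hR2 (le_of_lt hnrpos)) (by positivity)
      _ = _ := by ring
  -- rewrite as n * n^(2r+1) ≤ (6^s * r) * n^(2r+1)
  have key2 : (n:ℝ) * (n:ℝ)^(2*r+1) ≤ (6^s * r) * (n:ℝ)^(2*r+1) := by
    calc (n:ℝ) * (n:ℝ)^(2*r+1) = ((n:ℝ) * n)^s := by rw [hsdef]; ring
      _ ≤ 6^s * ((r : ℝ) * (n:ℝ)^s) * (n:ℝ)^r := key
      _ = (6^s * r) * (n:ℝ)^(2*r+1) := by rw [hsdef]; ring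
  have hfin : (n : ℝ) ≤ 6^s * r :=
    le_of_mul_le_mul_right key2 (by positivity)
  have hge : (6:ℝ)^s * (r+1) ≤ (n:ℝ) := by
    have : ((6^(r+1) * (r+1) : ℕ) : ℝ) ≤ (n : ℝ) := by exact_mod_cast hA
    push_cast at this
    rw [hsdef]
    linarith
  have h6pos : (0:ℝ) < 6^s := by positivity
  nlinarith

open Finset in
theorem stmt_9 {V : Type*} [Fintype V] (G : SimpleGraph V) (s : ℕ)
    (hfree : KssFree s G) (v : V)
    (hdeg : (6 : ℝ) ^ s * s ≤ (G.neighborSet v).ncard) :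
    ((G.neighborSet v).ncard : ℝ) ^ 2 / 4 ≤
      ({S : Finset V | S.card = 2 ∧ ↑S ⊆ G.neighborSet v ∧
        ∀ x ∈ S, ∀ y ∈ S, x ≠ y → ¬ G.Adj x y}.ncard : ℝ) := by
  classical
  obtain rfl | ⟨r, rfl⟩ : s = 0 ∨ ∃ r, s = r + 1 := by
    rcases s with _ | r
    · exact Or.inl rfl
    · exact Or.inr ⟨r, rfl⟩
  · exfalso
    refine hfree ⟨Sum.elim Fin.elim0 Fin.elim0, ?_⟩ ?_
    · rintro (a | a) <;> exact a.elim0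
    · rintro (a | a) <;> exact a.elim0
  set s := r + 1 with hsdef
  set A := G.neighborFinset v with hAdef
  set n := A.card with hndef
  have hAco : (↑A : Set V) = G.neighborSet v := by
    rw [hAdef, SimpleGraph.neighborFinset_def, Set.coe_toFinset]
  have hncn : (G.neighborSet v).ncard = n := by rw [← hAco, Set.ncard_coe_finset]
  have hn6 : 6 ^ s * s ≤ n := by
    have : ((6 ^ s * s : ℕ) : ℝ) ≤ (n : ℝ) := by push_cast; rw [← hncn] at *; exact_mod_cast hdeg
    exact_mod_cast this
  have h6n : 6 ≤ n := by
    calc 6 = 6 * 1 := by ring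
      _ ≤ 6 ^ s * s := Nat.mul_le_mul (Nat.le_self_pow (by omega) 6) (by omega)
      _ ≤ n := hn6
  set D := ∑ u ∈ A, (A.filter (G.Adj u)).card with hDdef
  have hkst : 3 * D + 1 ≤ n * n := kst_bound G r hfree A hn6
  set T' := (A.powersetCard 2).filter
    (fun S => ∀ x ∈ S, ∀ y ∈ S, x ≠ y → ¬ G.Adj x y) with hT'def
  have hset : {S : Finset V | S.card = 2 ∧ ↑S ⊆ G.neighborSet v ∧
      ∀ x ∈ S, ∀ y ∈ S, x ≠ y → ¬ G.Adj x y} = (↑T' : Set (Finset V)) := by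
    ext S
    simp only [hT'def, Finset.coe_filter, Set.mem_setOf_eq, Finset.mem_powersetCard]
    constructor
    · rintro ⟨h1, h2, h3⟩
      refine ⟨⟨?_, h1⟩, h3⟩
      rw [← Finset.coe_subset, hAco]
      exact h2
    · rintro ⟨⟨hsub, h1⟩, h3⟩
      refine ⟨h1, ?_, h3⟩
      rw [← hAco]
      exact Finset.coe_subset.2 hsub
  rw [hset, Set.ncard_coe_finset, hncn]
  set t := T'.card with htdef
  -- counting ordered pairs
  set M := (A.offDiag.filter fun p => ¬ G.Adj p.1 p.2).card with hMdef
  have hsplit : (A.offDiag.filter fun p => G.Adj p.1 p.2).card + M = A.offDiag.card :=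
    Finset.card_filter_add_card_filter_not _
  have hoff : A.offDiag.card = n * n - n := A.offDiag_card
  have hDeq : (A.offDiag.filter fun p => G.Adj p.1 p.2).card = D := by
    have h1 : A.offDiag.filter (fun p => G.Adj p.1 p.2)
        = (A ×ˢ A).filter (fun p => G.Adj p.1 p.2) := by
      ext p
      simp only [Finset.mem_filter, Finset.mem_offDiag, Finset.mem_product]
      constructor
      · rintro ⟨⟨ha, hb, _⟩, hadj⟩; exact ⟨⟨ha, hb⟩, hadj⟩
      · rintro ⟨⟨ha, hb⟩, hadj⟩; exact ⟨⟨ha, hb, hadj.ne⟩, hadj⟩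
    rw [h1, Finset.card_filter, Finset.sum_product, hDdef]
    congr 1 with u
    rw [← Finset.card_filter]
  have hM2t : M ≤ 2 * t := by
    rw [hMdef, htdef]
    apply Finset.card_le_mul_card_image_of_maps_to (f := fun p => ({p.1, p.2} : Finset V))
    · intro p hp
      simp only [Finset.mem_filter, Finset.mem_offDiag] at hp
      obtain ⟨⟨hp1, hp2, hpne⟩, hpadj⟩ := hp
      rw [hT'def, Finset.mem_filter, Finset.mem_powersetCard]
      refine ⟨⟨?_, Finset.card_pair hpne⟩, ?_⟩
      · intro x hx
        rcases Finset.mem_insert.1 hx with rfl | hx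
        · exact hp1
        · rw [Finset.mem_singleton] at hx; subst hx; exact hp2
      · intro x hx y hy hxy
        rcases Finset.mem_insert.1 hx with rfl | hx <;>
          rcases Finset.mem_insert.1 hy with rfl | hy
        · exact absurd rfl hxy
        · rw [Finset.mem_singleton] at hy; subst hy; exact hpadj
        · rw [Finset.mem_singleton] at hx; subst hx
          exact fun h => hpadj h.symm
        · rw [Finset.mem_singleton] at hx hy; subst hx; subst hy
          exact absurd rfl hxy
    · intro S _
      set F := (A.offDiag.filter fun p => ¬ G.Adj p.1 p.2).filter
        (fun p => ({p.1, p.2} : Finset V) = S) with hFdef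
      rcases F.eq_empty_or_nonempty with he | ⟨p₀, hp₀⟩
      · rw [he]; simp
      · have hp₀' := hp₀
        rw [hFdef, Finset.mem_filter, Finset.mem_filter, Finset.mem_offDiag] at hp₀'
        obtain ⟨⟨⟨_, _, hne₀⟩, _⟩, hS₀⟩ := hp₀'
        have hsub : F ⊆ ({(p₀.1, p₀.2), (p₀.2, p₀.1)} : Finset (V × V)) := by
          intro q hq
          rw [hFdef, Finset.mem_filter, Finset.mem_filter, Finset.mem_offDiag] at hq
          obtain ⟨⟨⟨_, _, hneq⟩, _⟩, hSq⟩ := hq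
          have hpair : ({q.1, q.2} : Finset V) = {p₀.1, p₀.2} := by rw [hSq, hS₀]
          have hq1 : q.1 ∈ ({p₀.1, p₀.2} : Finset V) := by
            rw [← hpair]; exact Finset.mem_insert_self _ _
          have hq2 : q.2 ∈ ({p₀.1, p₀.2} : Finset V) := by
            rw [← hpair]; exact Finset.mem_insert.2 (Or.inr (Finset.mem_singleton_self _))
          simp only [Finset.mem_insert, Finset.mem_singleton] at hq1 hq2 ⊢
          rcases hq1 with h1 | h1 <;> rcases hq2 with h2 | h2
          · exact absurd (h1.trans h2.symm) hneq
          · left; exact Prod.ext h1 h2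
          · right; exact Prod.ext h1 h2
          · exact absurd (h1.trans h2.symm) hneq
        calc F.card ≤ ({(p₀.1, p₀.2), (p₀.2, p₀.1)} : Finset (V × V)).card :=
              Finset.card_le_card hsub
          _ ≤ 2 := by
              apply le_trans (Finset.card_insert_le _ _)
              simp
  have hDM : D + M + n = n * n := by
    have hnn : n ≤ n * n := Nat.le_mul_of_pos_left n (by omega)
    omega
  -- final arithmetic over ℝ
  have hR1 : (D : ℝ) + M + n = n * n := by exact_mod_cast hDM
  have hR2 : (M : ℝ) ≤ 2 * t := by exact_mod_cast hM2t
  have hR3 : 3 * (D : ℝ) + 1 ≤ n * n := by exact_mod_cast hkst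
  have hR4 : (6 : ℝ) ≤ n := by exact_mod_cast h6n
  nlinarith [mul_nonneg (sub_nonneg.2 hR4) (le_trans (by norm_num) hR4)]
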